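/- Suppose all nonzero entries of an n×n alternating sign matrix A are contained in a set of e rows and f columns. Then the submatrix A_1 of A formed by these e rows and f columns satisfies: (number of −1 entries in A_1) − (number of +1 entries in A_1) = n − (e+f). In particular, n − (e+f) ≤ e·f. -/

import Mathlib

/-- An alternating sign matrix: entries in {0,1,-1}, all row and column sums
equal 1, and all partial row and column sums (from the start) are 0 or 1. -/
def IsASM {n : ℕ} (A : Matrix (Fin n) (Fin n) ℤ) : Prop :=
  (∀ i j, A i j = 0 ∨ A i j = 1 ∨ A i j = -1) ∧
  (∀ i, ∑ j, A i j = 1) ∧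
  (∀ j, ∑ i, A i j = 1) ∧
  (∀ i k, (∑ j ∈ Finset.Iic k, A i j) = 0 ∨ (∑ j ∈ Finset.Iic k, A i j) = 1) ∧
  (∀ j k, (∑ i ∈ Finset.Iic k, A i j) = 0 ∨ (∑ i ∈ Finset.Iic k, A i j) = 1)

theorem stmt_13 {n : ℕ} (A : Matrix (Fin n) (Fin n) ℤ) (hA : IsASM A)
    (E F : Finset (Fin n))
    (hcover : ∀ i j, A i j ≠ 0 → i ∈ E ∨ j ∈ F) :
    ((Finset.univ.filter (fun p : Fin n × Fin n =>
        p.1 ∈ E ∧ p.2 ∈ F ∧ A p.1 p.2 = -1)).card : ℤ) -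
      ((Finset.univ.filter (fun p : Fin n × Fin n =>
        p.1 ∈ E ∧ p.2 ∈ F ∧ A p.1 p.2 = 1)).card : ℤ) = n - (E.card + F.card) ∧
    (n : ℤ) - (E.card + F.card) ≤ (E.card : ℤ) * F.card := by
  obtain ⟨hval, hrow, hcol, -, -⟩ := hA
  set c1 : ℤ := ((Finset.univ.filter (fun p : Fin n × Fin n =>
        p.1 ∈ E ∧ p.2 ∈ F ∧ A p.1 p.2 = 1)).card : ℤ) with hc1
  set cm : ℤ := ((Finset.univ.filter (fun p : Fin n × Fin n =>
        p.1 ∈ E ∧ p.2 ∈ F ∧ A p.1 p.2 = -1)).card : ℤ) with hcm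
  -- The sum of A over E × F equals c1 - cm
  have key : c1 - cm = ∑ i ∈ E, ∑ j ∈ F, A i j := by
    have h1 : ∑ i ∈ E, ∑ j ∈ F, A i j = ∑ p ∈ E ×ˢ F, A p.1 p.2 :=
      (Finset.sum_product (s := E) (t := F) (f := fun p => A p.1 p.2)).symm
    have h2 : E ×ˢ F = Finset.univ.filter (fun p : Fin n × Fin n => p.1 ∈ E ∧ p.2 ∈ F) := by
      ext p; simp [Finset.mem_product]
    rw [h1, h2, Finset.sum_filter, hc1, hcm, Finset.card_filter, Finset.card_filter]
    push_cast
    rw [← Finset.sum_sub_distrib]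
    apply Finset.sum_congr rfl
    intro p _
    rcases hval p.1 p.2 with h | h | h <;>
      by_cases hE : p.1 ∈ E <;> by_cases hF : p.2 ∈ F <;>
      simp [h, hE, hF]
  -- rows outside E have all their mass in F
  have houtE : ∀ i ∉ E, ∑ j ∈ F, A i j = 1 := by
    intro i hi
    have : ∑ j ∈ F, A i j = ∑ j, A i j := by
      apply Finset.sum_subset (Finset.subset_univ F)
      intro j _ hj
      by_contra h
      rcases hcover i j h with h' | h'
      · exact hi h'
      · exact hj h'
    rw [this, hrow i]
  have hsplit : (∑ i ∈ E, ∑ j ∈ F, A i j) + ∑ i ∈ Eᶜ, ∑ j ∈ F, A i j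
      = ∑ i, ∑ j ∈ F, A i j := Finset.sum_add_sum_compl E _
  have hcompl : ∑ i ∈ Eᶜ, ∑ j ∈ F, A i j = (Eᶜ.card : ℤ) := by
    rw [Finset.sum_congr rfl (fun i hi => houtE i (Finset.mem_compl.mp hi))]
    simp
  have htot : ∑ i, ∑ j ∈ F, A i j = (F.card : ℤ) := by
    rw [Finset.sum_comm (f := fun i j => A i j)]
    simp [hcol]
  have hcardc : (Eᶜ.card : ℤ) = (n : ℤ) - E.card := by
    rw [Finset.card_compl]
    have := Finset.card_le_univ E
    simp only [Finset.card_univ, Fintype.card_fin] at *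
    omega
  have hs : ∑ i ∈ E, ∑ j ∈ F, A i j = (E.card : ℤ) + F.card - n := by
    rw [hcompl, hcardc, htot] at hsplit; linarith
  have part1 : cm - c1 = (n : ℤ) - (E.card + F.card) := by
    rw [hs] at key; linarith
  refine ⟨part1, ?_⟩
  have hle : cm ≤ (E.card : ℤ) * F.card := by
    rw [hcm]
    have : (Finset.univ.filter (fun p : Fin n × Fin n =>
        p.1 ∈ E ∧ p.2 ∈ F ∧ A p.1 p.2 = -1)).card ≤ (E ×ˢ F).card := by
      apply Finset.card_le_card
      intro p hp
      simp only [Finset.mem_filter] at hp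
      exact Finset.mem_product.mpr ⟨hp.2.1, hp.2.2.1⟩
    calc ((Finset.univ.filter _).card : ℤ) ≤ ((E ×ˢ F).card : ℤ) := by exact_mod_cast this
      _ = (E.card : ℤ) * F.card := by rw [Finset.card_product]; push_cast; ring
  have hc1nn : 0 ≤ c1 := by rw [hc1]; positivity
  linarith
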